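/- Let F be a field, G ∈ M_{m×n}(F) and F₀ ∈ M_{k×n}(F). The following are equivalent: (a) there exists H ∈ M_{m×k}(F) with G = H·F₀; (b) the row space of G is contained in the row space of F₀; (c) N(F₀) ⊆ N(G), where N(M) = {v ∈ Fⁿ : Mv = 0}; (d) rank(F₀) equals the rank of the (m+k)×n matrix obtained by stacking G above F₀. Moreover, if these hold, then every H with G = H·F₀ satisfies rank(G) ≤ rank(H) ≤ rank(G) + min(m − rank(G), k − rank(F₀)), and for every integer r with rank(G) ≤ r ≤ rank(G) + min(m − rank(G), k − rank(F₀)) there exists H ∈ M_{m×k}(F) with G = H·F₀ and rank(H) = r. -/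

import Mathlib

open Submodule Module Set

private lemma key_exists {F : Type*} [Field F] {m n k : ℕ}
    (f : (Fin n → F) →ₗ[F] (Fin k → F)) (g : (Fin n → F) →ₗ[F] (Fin m → F))
    (hker : LinearMap.ker f ≤ LinearMap.ker g) (s : ℕ)
    (hs1 : s ≤ m - finrank F (LinearMap.range g))
    (hs2 : s ≤ k - finrank F (LinearMap.range f)) :
    ∃ h : (Fin k → F) →ₗ[F] (Fin m → F), (∀ x, h (f x) = g x) ∧
      finrank F (LinearMap.range h) = finrank F (LinearMap.range g) + s := by
  classical
  obtain ⟨W, hW⟩ := Submodule.exists_isCompl (LinearMap.range f)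
  obtain ⟨U, hU⟩ := Submodule.exists_isCompl (LinearMap.range g)
  have hWdim : finrank F (LinearMap.range f) + finrank F W = k := by
    rw [Submodule.finrank_add_eq_of_isCompl hW, finrank_fin_fun]
  have hUdim : finrank F (LinearMap.range g) + finrank F U = m := by
    rw [Submodule.finrank_add_eq_of_isCompl hU, finrank_fin_fun]
  have hsU : s ≤ finrank F U := by omega
  have hsW : s ≤ finrank F W := by omega
  let e := f.quotKerEquivRange
  let gbar := (LinearMap.ker f).liftQ g hker
  let projV := Submodule.linearProjOfIsCompl (LinearMap.range f) W hW
  let projW := Submodule.linearProjOfIsCompl W (LinearMap.range f) hW.symm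
  let h₀ : (Fin k → F) →ₗ[F] (Fin m → F) :=
    gbar ∘ₗ (e.symm : (LinearMap.range f) →ₗ[F] _) ∘ₗ projV
  let bW := Module.finBasis F W
  let bU := Module.finBasis F U
  let t : Fin (finrank F W) → U := fun i =>
    if hi : (i : ℕ) < s then bU ⟨i, lt_of_lt_of_le hi hsU⟩ else 0
  let K' : W →ₗ[F] U := bW.constr F t
  let K : (Fin k → F) →ₗ[F] (Fin m → F) := U.subtype ∘ₗ K' ∘ₗ projW
  have hcomp : ∀ x, (h₀ + K) (f x) = g x := by
    intro x
    have h1 : projV (f x) = ⟨f x, LinearMap.mem_range_self f x⟩ :=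
      Submodule.linearProjOfIsCompl_apply_left hW ⟨f x, LinearMap.mem_range_self f x⟩
    have h2 : projW (f x) = 0 :=
      Submodule.projectionOnto_apply_of_mem_right hW.symm (LinearMap.mem_range_self f x)
    have h3 : e.symm ⟨f x, LinearMap.mem_range_self f x⟩ = Submodule.Quotient.mk x :=
      f.quotKerEquivRange_symm_apply_image x (LinearMap.mem_range_self f x)
    simp only [LinearMap.add_apply, LinearMap.comp_apply, h₀, K, h1, h2, map_zero, add_zero,
      LinearEquiv.coe_coe, h3]
    exact Submodule.liftQ_apply _ g x
  have hh₀W : ∀ w : W, h₀ (w : Fin k → F) = 0 := by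
    intro w
    have h1 : projV (w : Fin k → F) = 0 :=
      Submodule.projectionOnto_apply_of_mem_right hW w.2
    simp only [h₀, LinearMap.comp_apply, h1, map_zero]
  have hrange : LinearMap.range (h₀ + K) =
      LinearMap.range g ⊔ Submodule.map U.subtype (LinearMap.range K') := by
    apply le_antisymm
    · rintro _ ⟨x, rfl⟩
      have hx : (h₀ + K) x = h₀ x + K x := rfl
      rw [hx]
      apply Submodule.add_mem
      · apply Submodule.mem_sup_left
        have hmem : h₀ x ∈ LinearMap.range gbar := ⟨(e.symm : (LinearMap.range f) →ₗ[F] _) (projV x), rfl⟩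
        rwa [Submodule.range_liftQ] at hmem
      · exact Submodule.mem_sup_right ⟨K' (projW x), ⟨projW x, rfl⟩, rfl⟩
    · rw [sup_le_iff]
      constructor
      · rintro _ ⟨x, rfl⟩
        exact ⟨f x, hcomp x⟩
      · rintro _ ⟨u, ⟨w, rfl⟩, rfl⟩
        refine ⟨(w : Fin k → F), ?_⟩
        have h2 : projW (w : Fin k → F) = w :=
          Submodule.linearProjOfIsCompl_apply_left hW.symm w
        have hx : (h₀ + K) (w : Fin k → F) = h₀ (w : Fin k → F) + K (w : Fin k → F) := rfl
        rw [hx, hh₀W w, zero_add]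
        simp only [K, LinearMap.comp_apply, h2]
  -- dimension of range K'
  let t' : Fin s → U := fun j => bU ⟨j, lt_of_lt_of_le j.2 hsU⟩
  have hK'range : LinearMap.range K' = span F (Set.range t) := bW.constr_range F
  have hsub1 : Set.range t ⊆ insert 0 (Set.range t') := by
    rintro x ⟨i, rfl⟩
    by_cases hi : (i : ℕ) < s
    · exact Set.mem_insert_of_mem _ ⟨⟨(i : ℕ), hi⟩, by simp [t, t', hi]⟩
    · simp [t, hi]
  have hsub2 : Set.range t' ⊆ Set.range t := by
    rintro x ⟨j, rfl⟩
    exact ⟨⟨(j : ℕ), lt_of_lt_of_le j.2 hsW⟩, by simp [t, t', j.2]⟩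
  have hspan : span F (Set.range t) = span F (Set.range t') := by
    apply le_antisymm
    · exact (Submodule.span_mono hsub1).trans_eq Submodule.span_insert_zero
    · exact Submodule.span_mono hsub2
  have ht'li : LinearIndependent F t' := by
    apply bU.linearIndependent.comp
    intro j₁ j₂ hj
    have hv : (j₁ : ℕ) = (j₂ : ℕ) := by simpa using congrArg Fin.val hj
    exact Fin.ext hv
  have hdimK' : finrank F (LinearMap.range K') = s := by
    rw [hK'range, hspan, finrank_span_eq_card ht'li, Fintype.card_fin]
  have hdisj : LinearMap.range g ⊓ Submodule.map U.subtype (LinearMap.range K') = ⊥ := by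
    have h2 : Submodule.map U.subtype (LinearMap.range K') ≤ U := Submodule.map_subtype_le _ _
    exact (hU.disjoint.mono_right h2).eq_bot
  refine ⟨h₀ + K, hcomp, ?_⟩
  have hadd := Submodule.finrank_sup_add_finrank_inf_eq (LinearMap.range g)
    (Submodule.map U.subtype (LinearMap.range K'))
  rw [hdisj, finrank_bot, Submodule.finrank_map_subtype_eq, hdimK'] at hadd
  rw [hrange]
  omega

private lemma key_matrix {F : Type*} [Field F] {m n k : ℕ}
    (G : Matrix (Fin m) (Fin n) F) (F₀ : Matrix (Fin k) (Fin n) F)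
    (hker : LinearMap.ker F₀.mulVecLin ≤ LinearMap.ker G.mulVecLin)
    (r : ℕ) (h1 : G.rank ≤ r) (h2a : r ≤ m) (h2b : r ≤ G.rank + (k - F₀.rank)) :
    ∃ H : Matrix (Fin m) (Fin k) F, G = H * F₀ ∧ H.rank = r := by
  have hGdef : G.rank = finrank F (LinearMap.range G.mulVecLin) := rfl
  have hFdef : F₀.rank = finrank F (LinearMap.range F₀.mulVecLin) := rfl
  obtain ⟨h, hcomp, hrank⟩ := key_exists F₀.mulVecLin G.mulVecLin hker (r - G.rank)
    (by rw [← hGdef]; omega) (by rw [← hFdef]; omega)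
  have hm : (LinearMap.toMatrix' h).mulVecLin = h := by
    rw [← Matrix.toLin'_apply', Matrix.toLin'_toMatrix']
  refine ⟨LinearMap.toMatrix' h, ?_, ?_⟩
  · apply Matrix.toLin'.injective
    rw [Matrix.toLin'_apply', Matrix.toLin'_apply', Matrix.mulVecLin_mul, hm]
    refine LinearMap.ext fun x => ?_
    exact (hcomp x).symm
  · show finrank F (LinearMap.range (LinearMap.toMatrix' h).mulVecLin) = r
    rw [hm, hrank, ← hGdef]
    omega

private lemma rank_upper {F : Type*} [Field F] {m n k : ℕ}
    (G : Matrix (Fin m) (Fin n) F) (F₀ : Matrix (Fin k) (Fin n) F)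
    (H : Matrix (Fin m) (Fin k) F) (hH : G = H * F₀) :
    H.rank ≤ G.rank + (k - F₀.rank) := by
  obtain ⟨W, hW⟩ := Submodule.exists_isCompl (LinearMap.range F₀.mulVecLin)
  have hWdim : finrank F (LinearMap.range F₀.mulVecLin) + finrank F W = k := by
    rw [Submodule.finrank_add_eq_of_isCompl hW, finrank_fin_fun]
  have hcompeq : G.mulVecLin = H.mulVecLin ∘ₗ F₀.mulVecLin := by
    rw [hH, Matrix.mulVecLin_mul]
  have hrange : LinearMap.range H.mulVecLin =
      LinearMap.range G.mulVecLin ⊔ Submodule.map H.mulVecLin W := by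
    rw [hcompeq, LinearMap.range_comp, ← Submodule.map_sup, hW.codisjoint.eq_top,
      Submodule.map_top]
  have hb := Submodule.finrank_sup_add_finrank_inf_eq (LinearMap.range G.mulVecLin)
    (Submodule.map H.mulVecLin W)
  have hmaple : finrank F (Submodule.map H.mulVecLin W) ≤ finrank F W :=
    Submodule.finrank_map_le _ _
  have h1 : H.rank = finrank F (LinearMap.range H.mulVecLin) := rfl
  have h2 : G.rank = finrank F (LinearMap.range G.mulVecLin) := rfl
  have h3 : F₀.rank = finrank F (LinearMap.range F₀.mulVecLin) := rfl
  rw [h1, hrange, h2, h3]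
  omega

/-- Botha, matrix division. Let `F` be a field, `G ∈ M_{m×n}(F)` and
`F₀ ∈ M_{k×n}(F)`. The following are equivalent: (a) `G = H * F₀` for some `H`;
(b) the row space of `G` is contained in the row space of `F₀`; (c) `ker F₀ ⊆ ker G`;
(d) `rank F₀ = rank [G; F₀]` (stacked). Moreover, if these hold, every quotient `H`
satisfies `rank G ≤ rank H ≤ rank G + min (m - rank G) (k - rank F₀)`, and a quotient of
every rank in this range exists. -/
theorem stmt6 {m n k : ℕ} {F : Type*} [Field F]
    (G : Matrix (Fin m) (Fin n) F) (F₀ : Matrix (Fin k) (Fin n) F) :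
    ((∃ H : Matrix (Fin m) (Fin k) F, G = H * F₀) ↔
      Submodule.span F (Set.range G) ≤ Submodule.span F (Set.range F₀)) ∧
    ((∃ H : Matrix (Fin m) (Fin k) F, G = H * F₀) ↔
      LinearMap.ker F₀.mulVecLin ≤ LinearMap.ker G.mulVecLin) ∧
    ((∃ H : Matrix (Fin m) (Fin k) F, G = H * F₀) ↔
      F₀.rank = (Matrix.fromRows G F₀).rank) ∧
    ((∃ H : Matrix (Fin m) (Fin k) F, G = H * F₀) →
      (∀ H : Matrix (Fin m) (Fin k) F, G = H * F₀ →
        G.rank ≤ H.rank ∧ H.rank ≤ G.rank + min (m - G.rank) (k - F₀.rank)) ∧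
      (∀ r : ℕ, G.rank ≤ r → r ≤ G.rank + min (m - G.rank) (k - F₀.rank) →
        ∃ H : Matrix (Fin m) (Fin k) F, G = H * F₀ ∧ H.rank = r)) := by
  classical
  have hGm : G.rank ≤ m := Matrix.rank_le_height G
  have hab : (∃ H : Matrix (Fin m) (Fin k) F, G = H * F₀) ↔
      Submodule.span F (Set.range G) ≤ Submodule.span F (Set.range F₀) := by
    constructor
    · rintro ⟨H, rfl⟩
      rw [Submodule.span_le]
      rintro _ ⟨i, rfl⟩
      have hrow : (H * F₀) i = ∑ l, H i l • F₀ l := by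
        ext j
        simp [Matrix.mul_apply, Finset.sum_apply]
      rw [hrow]
      exact Submodule.sum_mem _ fun l _ =>
        Submodule.smul_mem _ _ (Submodule.subset_span ⟨l, rfl⟩)
    · intro hle
      have hmem : ∀ i, ∃ c : Fin k → F, ∑ l, c l • F₀ l = G i := fun i =>
        (mem_span_range_iff_exists_fun F).mp (hle (Submodule.subset_span ⟨i, rfl⟩))
      choose c hc using hmem
      refine ⟨Matrix.of c, ?_⟩
      ext i j
      have hcj := congrFun (hc i) j
      simp only [Finset.sum_apply, Pi.smul_apply, smul_eq_mul] at hcj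
      rw [Matrix.mul_apply]
      exact hcj.symm
  have hac : (∃ H : Matrix (Fin m) (Fin k) F, G = H * F₀) ↔
      LinearMap.ker F₀.mulVecLin ≤ LinearMap.ker G.mulVecLin := by
    constructor
    · rintro ⟨H, rfl⟩
      rw [Matrix.mulVecLin_mul]
      exact LinearMap.ker_le_ker_comp _ _
    · intro hker
      obtain ⟨H, hH, -⟩ := key_matrix G F₀ hker G.rank le_rfl hGm (Nat.le_add_right _ _)
      exact ⟨H, hH⟩
  have hset : Set.range (Matrix.fromRows G F₀) = Set.range G ∪ Set.range F₀ :=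
    Sum.elim_range G F₀
  have had : (∃ H : Matrix (Fin m) (Fin k) F, G = H * F₀) ↔
      F₀.rank = (Matrix.fromRows G F₀).rank := by
    constructor
    · intro hex
      have hle := hab.mp hex
      rw [Matrix.rank_eq_finrank_span_row, Matrix.rank_eq_finrank_span_row, Matrix.row_def,
        Matrix.row_def, hset,
        Submodule.span_union, sup_eq_right.mpr hle]
    · intro heq
      apply hab.mpr
      rw [Matrix.rank_eq_finrank_span_row, Matrix.rank_eq_finrank_span_row, Matrix.row_def,
        Matrix.row_def, hset,
        Submodule.span_union] at heq
      have hEq := Submodule.eq_of_le_of_finrank_eq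
        (le_sup_right : Submodule.span F (Set.range F₀) ≤
          Submodule.span F (Set.range G) ⊔ Submodule.span F (Set.range F₀)) heq
      exact le_sup_left.trans_eq hEq.symm
  refine ⟨hab, hac, had, fun hex => ⟨?_, ?_⟩⟩
  · intro H hH
    refine ⟨?_, ?_⟩
    · rw [hH]
      exact Matrix.rank_mul_le_left H F₀
    · have h1 := rank_upper G F₀ H hH
      have h2 : H.rank ≤ m := Matrix.rank_le_height H
      omega
  · intro r hr1 hr2
    exact key_matrix G F₀ (hac.mp hex) r hr1 (by omega) (by omega)
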